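/- Let T ∈ ℝ^{n_1×⋯×n_d} have a TT-representation, i.e., a TR-representation with cores G_1,…,G_d, TR-ranks (r_0, r_1, …, r_d) and r_0 = r_d = 1, so that G_1(i_1) ∈ ℝ^{1×r_1}. Let r̃_0 be a divisor of r_1 and write m = r_1/r̃_0. Partition G_1(i_1) = [G_1^{(1)}(i_1), …, G_1^{(r̃_0)}(i_1)] into r̃_0 row blocks of size 1×m, and partition G_2(i_2) vertically into r̃_0 blocks G_2^{(j)}(i_2) ∈ ℝ^{m×r_2}. Define new cores: G̃_1(i_1) ∈ ℝ^{r̃_0×m} obtained by stacking G_1^{(1)}(i_1),…,G_1^{(r̃_0)}(i_1) vertically; G̃_2(i_2) ∈ ℝ^{m×(r̃_0 r_2)} obtained by concatenating G_2^{(1)}(i_2),…,G_2^{(r̃_0)}(i_2) horizontally; and for 3 ≤ k ≤ d, G̃_k(i_k) = the block-diagonal matrix consisting of r̃_0 copies of G_k(i_k), of size (r̃_0 r_{k−1})×(r̃_0 r_k). Then for all indices, Trace(G̃_1(i_1)·G̃_2(i_2)·…·G̃_d(i_d)) = T(i_1,…,i_d); i.e., the cores G̃_k form a TR-representation of T with end-rank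 r̃_0. -/
import Mathlib


/-- Cyclic successor on `Fin d`. -/
def finSucc {d : ℕ} (k : Fin d) : Fin d := ⟨(k.val + 1) % d, Nat.mod_lt _ k.pos⟩

/-- Value of the tensor-ring contraction of cores `G` at the multi-index `i`
(the trace of the product of the core matrices, in index form). -/
def trVal {d : ℕ} (n ρ : Fin d → ℕ)
    (G : ∀ k : Fin d, Fin (n k) → Matrix (Fin (ρ k)) (Fin (ρ (finSucc k))) ℝ)
    (i : ∀ k : Fin d, Fin (n k)) : ℝ :=
  ∑ α : ∀ k : Fin d, Fin (ρ k), ∏ k : Fin d, G k (i k) (α k) (α (finSucc k))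

/-- `(ρ 0, …, ρ (d-1), ρ 0)` is a TR-rank of `T`. -/
def IsTRRank {d : ℕ} (n ρ : Fin d → ℕ) (T : (∀ k : Fin d, Fin (n k)) → ℝ) : Prop :=
  ∃ G : ∀ k : Fin d, Fin (n k) → Matrix (Fin (ρ k)) (Fin (ρ (finSucc k))) ℝ,
    ∀ i, T i = trVal n ρ G i

/-- The `k`-th unfolding matrix of a tensor. -/
def unfold {d : ℕ} (n : Fin d → ℕ) (T : (∀ k : Fin d, Fin (n k)) → ℝ) (k : ℕ) :
    Matrix (∀ j : {j : Fin d // j.val < k}, Fin (n j.val))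
      (∀ j : {j : Fin d // ¬ j.val < k}, Fin (n j.val)) ℝ :=
  Matrix.of fun a b => T (fun j => if h : j.val < k then a ⟨j, h⟩ else b ⟨j, h⟩)

/-- The index `0` of `Fin d`, for `2 ≤ d`. -/
def fin0 {d : ℕ} (hd : 2 ≤ d) : Fin d := ⟨0, by omega⟩

/-- The index `1` of `Fin d`, for `2 ≤ d`. -/
def fin1 {d : ℕ} (hd : 2 ≤ d) : Fin d := ⟨1, by omega⟩

lemma finSucc_fin0 {d : ℕ} (hd : 2 ≤ d) : finSucc (fin0 hd) = fin1 hd := by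
  ext
  show (0 + 1) % d = 1
  exact Nat.mod_eq_of_lt (by omega)

lemma finSucc_val_of_lt {d : ℕ} {k : Fin d} (h : k.val + 1 < d) :
    (finSucc k).val = k.val + 1 := Nat.mod_eq_of_lt h

lemma finSucc_eq_zero {d : ℕ} (hd : 2 ≤ d) {k : Fin d} (h : k.val + 1 = d) :
    finSucc k = fin0 hd := by
  apply Fin.ext
  show (k.val + 1) % d = 0
  rw [h, Nat.mod_self]

lemma finSucc_ne_one {d : ℕ} {k : Fin d} (h2 : 1 ≤ k.val) : (finSucc k).val ≠ 1 := by
  rcases Nat.lt_or_ge (k.val + 1) d with h | h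
  · rw [finSucc_val_of_lt h]; omega
  · have h' : k.val + 1 = d := by have := k.isLt; omega
    have hz : (finSucc k).val = 0 := by
      show (k.val + 1) % d = 0
      rw [h', Nat.mod_self]
    omega

lemma matCongr {a b : ℕ} (M : Matrix (Fin a) (Fin b) ℝ) {x x' : Fin a} {y y' : Fin b}
    (hx : x.val = x'.val) (hy : y.val = y'.val) : M x y = M x' y' := by
  rw [Fin.ext hx, Fin.ext hy]

/-- Edge insertion (Algorithm `alg:insert_edge`): given a TT-representation of `T`
(i.e. a TR-representation with end-rank `ρ 0 = 1`) and a divisor `r0` of `ρ 1`, with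
`ρ 1 = r0 * m`, the cores `H` obtained by stacking the `r0` blocks of the first core
vertically, the `r0` blocks of the second core horizontally, and replacing every
remaining core by the block-diagonal matrix consisting of `r0` copies of itself,
form a TR-representation of `T` with TR-ranks `(r0, m, r0·ρ 2, …, r0·ρ (d-1), r0)`. -/
theorem tt_edge_insertion {d : ℕ} (hd : 2 ≤ d) (n ρ : Fin d → ℕ)
    (hρ0 : ρ (fin0 hd) = 1)
    (G : ∀ k : Fin d, Fin (n k) → Matrix (Fin (ρ k)) (Fin (ρ (finSucc k))) ℝ)
    (T : (∀ k : Fin d, Fin (n k)) → ℝ)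
    (hT : ∀ i, T i = trVal n ρ G i)
    (r0 m : ℕ) (hdiv : ρ (fin1 hd) = r0 * m)
    (σ : Fin d → ℕ)
    (hσ0 : σ (fin0 hd) = r0) (hσ1 : σ (fin1 hd) = m)
    (hσmid : ∀ k : Fin d, 2 ≤ k.val → σ k = r0 * ρ k)
    (H : ∀ k : Fin d, Fin (n k) → Matrix (Fin (σ k)) (Fin (σ (finSucc k))) ℝ)
    -- the first new core stacks the `r0` blocks of the first core vertically:
    (hH0 : ∀ (i : Fin (n (fin0 hd))) (x : Fin (σ (fin0 hd)))
        (y : Fin (σ (finSucc (fin0 hd)))),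
      H (fin0 hd) i x y =
        G (fin0 hd) i ⟨0, by rw [hρ0]; omega⟩
          ⟨x.val * m + y.val, by
            have h1 : ρ (finSucc (fin0 hd)) = r0 * m := by
              rw [finSucc_fin0 hd]; exact hdiv
            have h2 : σ (finSucc (fin0 hd)) = m := by
              rw [finSucc_fin0 hd]; exact hσ1
            have hx : x.val < r0 := by omega
            have hy : y.val < m := by omega
            calc x.val * m + y.val < (x.val + 1) * m := by
                  rw [Nat.add_mul, Nat.one_mul]; omega
              _ ≤ r0 * m := Nat.mul_le_mul hx (le_refl m)
              _ = ρ (finSucc (fin0 hd)) := h1.symm⟩)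
    -- the second new core stacks the `r0` blocks of the second core horizontally:
    (hH1 : ∀ (i : Fin (n (fin1 hd))) (x : Fin (σ (fin1 hd)))
        (y : Fin (σ (finSucc (fin1 hd)))),
      H (fin1 hd) i x y =
        G (fin1 hd) i
          ⟨(y.val / ρ (finSucc (fin1 hd))) * m + x.val, by
            have hx : x.val < m := by
              have := x.isLt; omega
            have hq : y.val / ρ (finSucc (fin1 hd)) < r0 := by
              rcases Nat.lt_or_ge (2 : ℕ) d with h3 | h3
              · have hval : (finSucc (fin1 hd)).val = 2 := by
                  show (1 + 1) % d = 2
                  exact Nat.mod_eq_of_lt (by omega)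
                have hs : σ (finSucc (fin1 hd)) = r0 * ρ (finSucc (fin1 hd)) :=
                  hσmid _ (by omega)
                have hy := y.isLt
                have hpos : 0 < ρ (finSucc (fin1 hd)) := by
                  rcases Nat.eq_zero_or_pos (ρ (finSucc (fin1 hd))) with h0 | h0
                  · rw [h0, Nat.mul_zero] at hs; omega
                  · exact h0
                have hy' : y.val < r0 * ρ (finSucc (fin1 hd)) := by omega
                exact (Nat.div_lt_iff_lt_mul hpos).mpr hy'
              · have hd2 : d = 2 := by omega
                have hfs : finSucc (fin1 hd) = fin0 hd := by
                  ext
                  show (1 + 1) % d = 0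
                  rw [hd2]
                have h1 : ρ (finSucc (fin1 hd)) = 1 := by rw [hfs]; exact hρ0
                have hsy : σ (finSucc (fin1 hd)) = r0 := by rw [hfs]; exact hσ0
                have hy := y.isLt
                rw [h1, Nat.div_one]
                omega
            calc (y.val / ρ (finSucc (fin1 hd))) * m + x.val
                < (y.val / ρ (finSucc (fin1 hd)) + 1) * m := by
                  rw [Nat.add_mul, Nat.one_mul]; omega
              _ ≤ r0 * m := Nat.mul_le_mul hq (le_refl m)
              _ = ρ (fin1 hd) := hdiv.symm⟩
          ⟨y.val % ρ (finSucc (fin1 hd)), by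
            apply Nat.mod_lt
            rcases Nat.lt_or_ge (2 : ℕ) d with h3 | h3
            · have hval : (finSucc (fin1 hd)).val = 2 := by
                show (1 + 1) % d = 2
                exact Nat.mod_eq_of_lt (by omega)
              have hs : σ (finSucc (fin1 hd)) = r0 * ρ (finSucc (fin1 hd)) :=
                hσmid _ (by omega)
              have hy := y.isLt
              rcases Nat.eq_zero_or_pos (ρ (finSucc (fin1 hd))) with h0 | h0
              · rw [h0, Nat.mul_zero] at hs; omega
              · exact h0
            · have hd2 : d = 2 := by omega
              have hfs : finSucc (fin1 hd) = fin0 hd := by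
                ext
                show (1 + 1) % d = 0
                rw [hd2]
              have h1 : ρ (finSucc (fin1 hd)) = 1 := by rw [hfs]; exact hρ0
              omega⟩)
    -- every remaining new core is block-diagonal with `r0` copies of the old core:
    (hHmid : ∀ (k : Fin d) (hk : 2 ≤ k.val) (i : Fin (n k)) (x : Fin (σ k))
        (y : Fin (σ (finSucc k))),
      H k i x y =
        if x.val / ρ k = y.val / ρ (finSucc k) then
          G k i
            ⟨x.val % ρ k, by
              apply Nat.mod_lt
              have hs : σ k = r0 * ρ k := hσmid k hk
              have hx := x.isLt
              rcases Nat.eq_zero_or_pos (ρ k) with h0 | h0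
              · rw [h0, Nat.mul_zero] at hs; omega
              · exact h0⟩
            ⟨y.val % ρ (finSucc k), by
              apply Nat.mod_lt
              rcases Nat.lt_or_ge (k.val + 1) d with h' | h'
              · have hval : (finSucc k).val = k.val + 1 := Nat.mod_eq_of_lt h'
                have hs : σ (finSucc k) = r0 * ρ (finSucc k) := hσmid _ (by omega)
                have hy := y.isLt
                rcases Nat.eq_zero_or_pos (ρ (finSucc k)) with h0 | h0
                · rw [h0, Nat.mul_zero] at hs; omega
                · exact h0
              · have he : k.val + 1 = d := by have := k.isLt; omega
                have hfs : finSucc k = fin0 hd := by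
                  ext
                  show (k.val + 1) % d = 0
                  rw [he, Nat.mod_self]
                have h1 : ρ (finSucc k) = 1 := by rw [hfs]; exact hρ0
                omega⟩
        else 0) :
    ∀ i, T i = trVal n σ H i := by
  intro i
  rw [hT i]
  unfold trVal
  by_cases hρ1 : ρ (fin1 hd) = 0
  · haveI h1 : IsEmpty (∀ k : Fin d, Fin (ρ k)) :=
      ⟨fun f => absurd (f (fin1 hd)).isLt (by omega)⟩
    have h01 : σ (fin0 hd) = 0 ∨ σ (fin1 hd) = 0 := by
      rw [hσ0, hσ1]
      rw [hdiv] at hρ1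
      rcases Nat.mul_eq_zero.mp hρ1 with h | h
      · left; exact h
      · right; exact h
    haveI h2 : IsEmpty (∀ k : Fin d, Fin (σ k)) := by
      rcases h01 with h | h
      · exact ⟨fun f => absurd (f (fin0 hd)).isLt (by omega)⟩
      · exact ⟨fun f => absurd (f (fin1 hd)).isLt (by omega)⟩
    simp only [Finset.univ_eq_empty, Finset.sum_empty]
  · -- Main case: `ρ 1 = r0 * m ≠ 0`
    have hm : 0 < m := by
      rcases Nat.eq_zero_or_pos m with h | h
      · exact absurd (by rw [hdiv, h, Nat.mul_zero]) hρ1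
      · exact h
    have hr0 : 0 < r0 := by
      rcases Nat.eq_zero_or_pos r0 with h | h
      · exact absurd (by rw [hdiv, h, Nat.zero_mul]) hρ1
      · exact h
    have hjlt : ∀ β : ∀ k : Fin d, Fin (ρ k), (β (fin1 hd)).val / m < r0 := by
      intro β
      have hb : (β (fin1 hd)).val < r0 * m := lt_of_lt_of_eq (β (fin1 hd)).isLt hdiv
      exact (Nat.div_lt_iff_lt_mul hm).mpr hb
    -- the encoding map Φ
    obtain ⟨Φ, S0, S1, S2⟩ :
        ∃ Φ : (∀ k : Fin d, Fin (ρ k)) → (∀ k : Fin d, Fin (σ k)),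
          (∀ β (k : Fin d), k.val = 0 → (Φ β k).val = (β (fin1 hd)).val / m) ∧
          (∀ β (k : Fin d), k.val = 1 → (Φ β k).val = (β (fin1 hd)).val % m) ∧
          (∀ β (k : Fin d), ¬k.val = 0 → ¬k.val = 1 →
            (Φ β k).val = ((β (fin1 hd)).val / m) * ρ k + (β k).val) := by
      refine ⟨fun β k =>
        if h0 : k.val = 0 then
          ⟨(β (fin1 hd)).val / m, by
            have hk : k = fin0 hd := Fin.ext h0
            rw [hk, hσ0]; exact hjlt β⟩
        else if h1 : k.val = 1 then
          ⟨(β (fin1 hd)).val % m, by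
            have hk : k = fin1 hd := Fin.ext h1
            rw [hk, hσ1]; exact Nat.mod_lt _ hm⟩
        else
          ⟨((β (fin1 hd)).val / m) * ρ k + (β k).val, by
            rw [hσmid k (by omega)]
            have hb := (β k).isLt
            have hj := hjlt β
            calc ((β (fin1 hd)).val / m) * ρ k + (β k).val
                < ((β (fin1 hd)).val / m + 1) * ρ k := by
                  rw [Nat.add_mul, Nat.one_mul]; omega
              _ ≤ r0 * ρ k := Nat.mul_le_mul hj (le_refl _)⟩, ?_, ?_, ?_⟩
      · intro β k h0; dsimp only; rw [dif_pos h0]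
      · intro β k h1; dsimp only; rw [dif_neg (by omega : ¬k.val = 0), dif_pos h1]
      · intro β k h0 h1; dsimp only; rw [dif_neg h0, dif_neg h1]
    -- combined form for `k.val ≠ 1`
    have Sn1 : ∀ β (k : Fin d), k.val ≠ 1 →
        (Φ β k).val = ((β (fin1 hd)).val / m) * ρ k + (β k).val := by
      intro β k h1
      by_cases h0 : k.val = 0
      · have hk : k = fin0 hd := Fin.ext h0
        subst hk
        rw [S0 β _ rfl]
        have hb : (β (fin0 hd)).val = 0 := by
          have := (β (fin0 hd)).isLt
          omega
        rw [hb, hρ0, Nat.mul_one, Nat.add_zero]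
      · exact S2 β k h0 h1
    -- termwise equality of factors
    have hterm : ∀ β (k : Fin d),
        H k (i k) (Φ β k) (Φ β (finSucc k)) = G k (i k) (β k) (β (finSucc k)) := by
      intro β k
      by_cases h0 : k.val = 0
      · have hk : k = fin0 hd := Fin.ext h0
        subst hk
        rw [hH0]
        apply matCongr
        · show (0 : ℕ) = (β (fin0 hd)).val
          have := (β (fin0 hd)).isLt
          omega
        · show (Φ β (fin0 hd)).val * m + (Φ β (finSucc (fin0 hd))).val
            = (β (finSucc (fin0 hd))).val
          have hfsv : (finSucc (fin0 hd)).val = 1 := congrArg Fin.val (finSucc_fin0 hd)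
          rw [S0 β _ rfl, S1 β _ hfsv]
          have hb : (β (finSucc (fin0 hd))).val = (β (fin1 hd)).val :=
            congrArg (fun t => (β t).val) (finSucc_fin0 hd)
          rw [hb]
          exact Nat.div_add_mod' _ _
      by_cases h1 : k.val = 1
      · have hk : k = fin1 hd := Fin.ext h1
        subst hk
        rw [hH1]
        have hfsn1 : (finSucc (fin1 hd)).val ≠ 1 := finSucc_ne_one (le_refl 1)
        have hy := Sn1 β (finSucc (fin1 hd)) hfsn1
        have hbfs := (β (finSucc (fin1 hd))).isLt
        have hρf : 0 < ρ (finSucc (fin1 hd)) := by omega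
        have hdy : (Φ β (finSucc (fin1 hd))).val / ρ (finSucc (fin1 hd))
            = (β (fin1 hd)).val / m := by
          rw [hy, Nat.add_comm, Nat.add_mul_div_right _ _ hρf,
            Nat.div_eq_of_lt hbfs, Nat.zero_add]
        have hmy : (Φ β (finSucc (fin1 hd))).val % ρ (finSucc (fin1 hd))
            = (β (finSucc (fin1 hd))).val := by
          rw [hy, Nat.mul_add_mod_of_lt hbfs]
        apply matCongr
        · show (Φ β (finSucc (fin1 hd))).val / ρ (finSucc (fin1 hd)) * m
              + (Φ β (fin1 hd)).val = (β (fin1 hd)).val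
          rw [hdy, S1 β _ rfl]
          exact Nat.div_add_mod' _ _
        · exact hmy
      · have h2 : 2 ≤ k.val := by omega
        rw [hHmid k h2]
        have hx := Sn1 β k h1
        have hfsn1 : (finSucc k).val ≠ 1 := finSucc_ne_one (by omega)
        have hy := Sn1 β (finSucc k) hfsn1
        have hbk := (β k).isLt
        have hbfs := (β (finSucc k)).isLt
        have hρk : 0 < ρ k := by omega
        have hρf : 0 < ρ (finSucc k) := by omega
        have hdx : (Φ β k).val / ρ k = (β (fin1 hd)).val / m := by
          rw [hx, Nat.add_comm, Nat.add_mul_div_right _ _ hρk,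
            Nat.div_eq_of_lt hbk, Nat.zero_add]
        have hdy : (Φ β (finSucc k)).val / ρ (finSucc k) = (β (fin1 hd)).val / m := by
          rw [hy, Nat.add_comm, Nat.add_mul_div_right _ _ hρf,
            Nat.div_eq_of_lt hbfs, Nat.zero_add]
        rw [if_pos (hdx.trans hdy.symm)]
        apply matCongr
        · show (Φ β k).val % ρ k = (β k).val
          rw [hx, Nat.mul_add_mod_of_lt hbk]
        · show (Φ β (finSucc k)).val % ρ (finSucc k) = (β (finSucc k)).val
          rw [hy, Nat.mul_add_mod_of_lt hbfs]
    -- Φ is injective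
    have hinj : Function.Injective Φ := by
      intro β β' h
      funext k
      apply Fin.ext
      have ediv := congrArg Fin.val (congrFun h (fin0 hd))
      rw [S0 β _ rfl, S0 β' _ rfl] at ediv
      by_cases h0 : k.val = 0
      · have hk : k = fin0 hd := Fin.ext h0
        subst hk
        have hb := (β (fin0 hd)).isLt
        have hb' := (β' (fin0 hd)).isLt
        omega
      by_cases h1 : k.val = 1
      · have hk : k = fin1 hd := Fin.ext h1
        subst hk
        have emod := congrArg Fin.val (congrFun h (fin1 hd))
        rw [S1 β _ rfl, S1 β' _ rfl] at emod
        rw [← Nat.div_add_mod' (β (fin1 hd)).val m,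
          ← Nat.div_add_mod' (β' (fin1 hd)).val m, ediv, emod]
      · have e := congrArg Fin.val (congrFun h k)
        rw [S2 β k h0 h1, S2 β' k h0 h1, ediv] at e
        exact Nat.add_left_cancel e
    -- vanishing off the image of Φ
    have hvan : ∀ α : ∀ k : Fin d, Fin (σ k), α ∉ Finset.univ.image Φ →
        (∏ k : Fin d, H k (i k) (α k) (α (finSucc k))) = 0 := by
      intro α hα
      by_contra hne
      apply hα
      have hfac : ∀ k : Fin d, H k (i k) (α k) (α (finSucc k)) ≠ 0 := by
        intro k hk
        exact hne (Finset.prod_eq_zero (Finset.mem_univ k) hk)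
      have hstep : ∀ k : Fin d, 2 ≤ k.val →
          (α k).val / ρ k = (α (finSucc k)).val / ρ (finSucc k) := by
        intro k h2
        by_contra hc
        exact hfac k (by rw [hHmid k h2, if_neg hc])
      have hchain : ∀ t : ℕ, ∀ k : Fin d, d - k.val ≤ t → 2 ≤ k.val →
          (α k).val / ρ k = (α (fin0 hd)).val := by
        intro t
        induction t with
        | zero => intro k ht h2; exact absurd ht (by have := k.isLt; omega)
        | succ t ih =>
          intro k ht h2
          rw [hstep k h2]
          rcases Nat.lt_or_ge (k.val + 1) d with hlt | hge
          · have hv : (finSucc k).val = k.val + 1 := finSucc_val_of_lt hlt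
            exact ih (finSucc k) (by omega) (by omega)
          · have he : k.val + 1 = d := by have := k.isLt; omega
            rw [finSucc_eq_zero hd he, hρ0, Nat.div_one]
      have hρpos : ∀ k : Fin d, 2 ≤ k.val → 0 < ρ k := by
        intro k h2
        have hσk : σ k = r0 * ρ k := hσmid k h2
        have hb := (α k).isLt
        rcases Nat.eq_zero_or_pos (ρ k) with h | h
        · rw [h, Nat.mul_zero] at hσk; omega
        · exact h
      have ha0 : (α (fin0 hd)).val < r0 := lt_of_lt_of_eq (α (fin0 hd)).isLt hσ0
      have ha1 : (α (fin1 hd)).val < m := lt_of_lt_of_eq (α (fin1 hd)).isLt hσ1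
      obtain ⟨β, hβ1, hβ2⟩ :
          ∃ β : ∀ k : Fin d, Fin (ρ k),
            (β (fin1 hd)).val = (α (fin0 hd)).val * m + (α (fin1 hd)).val ∧
            (∀ k : Fin d, ¬k.val = 0 → ¬k.val = 1 → (β k).val = (α k).val % ρ k) := by
        refine ⟨fun k =>
          if h0 : k.val = 0 then
            ⟨0, by have hk : k = fin0 hd := Fin.ext h0; rw [hk, hρ0]; omega⟩
          else if h1 : k.val = 1 then
            ⟨(α (fin0 hd)).val * m + (α (fin1 hd)).val, by
              have hk : k = fin1 hd := Fin.ext h1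
              rw [hk, hdiv]
              calc (α (fin0 hd)).val * m + (α (fin1 hd)).val
                  < ((α (fin0 hd)).val + 1) * m := by
                    rw [Nat.add_mul, Nat.one_mul]; omega
                _ ≤ r0 * m := Nat.mul_le_mul ha0 (le_refl _)⟩
          else ⟨(α k).val % ρ k, Nat.mod_lt _ (hρpos k (by omega))⟩, ?_, ?_⟩
        · dsimp only
          have hne : ¬(fin1 hd).val = 0 := Nat.one_ne_zero
          have hpos : (fin1 hd).val = 1 := rfl
          rw [dif_neg hne, dif_pos hpos]
        · intro k h0 h1; dsimp only; rw [dif_neg h0, dif_neg h1]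
      have hj : (β (fin1 hd)).val / m = (α (fin0 hd)).val := by
        rw [hβ1, Nat.add_comm, Nat.add_mul_div_right _ _ hm,
          Nat.div_eq_of_lt ha1, Nat.zero_add]
      refine Finset.mem_image.mpr ⟨β, Finset.mem_univ β, ?_⟩
      funext k
      apply Fin.ext
      by_cases h0 : k.val = 0
      · have hk : k = fin0 hd := Fin.ext h0
        subst hk
        rw [S0 β _ rfl, hj]
      by_cases h1 : k.val = 1
      · have hk : k = fin1 hd := Fin.ext h1
        subst hk
        rw [S1 β _ rfl, hβ1, Nat.mul_add_mod_of_lt ha1]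
      · rw [S2 β k h0 h1, hj, hβ2 k h0 h1]
        have hc := hchain d k (by omega) (by omega)
        rw [← hc]
        exact Nat.div_add_mod' _ _
    -- put everything together
    calc (∑ β : ∀ k : Fin d, Fin (ρ k), ∏ k : Fin d, G k (i k) (β k) (β (finSucc k)))
        = ∑ β : ∀ k : Fin d, Fin (ρ k),
            ∏ k : Fin d, H k (i k) (Φ β k) (Φ β (finSucc k)) := by
          apply Finset.sum_congr rfl
          intro β _
          apply Finset.prod_congr rfl
          intro k _
          exact (hterm β k).symm
      _ = ∑ α ∈ Finset.univ.image Φ,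
            ∏ k : Fin d, H k (i k) (α k) (α (finSucc k)) :=
          (Finset.sum_image (f := fun α => ∏ k : Fin d, H k (i k) (α k) (α (finSucc k)))
            (g := Φ) (fun b _ b' _ h => hinj h)).symm
      _ = ∑ α : ∀ k : Fin d, Fin (σ k),
            ∏ k : Fin d, H k (i k) (α k) (α (finSucc k)) :=
          Finset.sum_subset (Finset.subset_univ _) (fun x _ hx => hvan x hx)
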